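/- Let X be a symmetric n×n real matrix and λ > 0. If (U*, V*) is a critical point of the penalized problem f(U,V) = (1/2)‖X − U Vᵀ‖_F² + (λ/2)‖U − V‖_F² with nonnegativity constraints, satisfying ‖U*V*ᵀ‖₂ < 2λ + σ_n(X), then U* = V* and U* is a critical point of the symmetric NMF problem min_{U ≥ 0} (1/2)‖X − U Uᵀ‖_F², i.e., 0 ∈ (U*U*ᵀ − X)U* + ∂δ₊(U*). -/

import Mathlib

open Matrix BigOperators

/-- Frobenius norm of a real matrix. -/
noncomputable def frob {n m : ℕ} (A : Matrix (Fin n) (Fin m) ℝ) : ℝ :=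
  Real.sqrt (∑ i, ∑ j, (A i j)^2)

/-- Spectral (ℓ2 operator) norm of a square real matrix. -/
noncomputable def specNorm {n : ℕ} (A : Matrix (Fin n) (Fin n) ℝ) : ℝ :=
  ‖(Matrix.toEuclideanCLM (𝕜 := ℝ) A : EuclideanSpace ℝ (Fin n) →L[ℝ] EuclideanSpace ℝ (Fin n))‖

/-- Trace inner product ⟨A, B⟩ = trace(Aᵀ B). -/
noncomputable def inprod {n m : ℕ} (A B : Matrix (Fin n) (Fin m) ℝ) : ℝ :=
  (Aᵀ * B).trace

/-! ### Auxiliary lemmas -/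

/-- entrywise Frobenius inner product -/
noncomputable def ip {n r : ℕ} (A B : Matrix (Fin n) (Fin r) ℝ) : ℝ :=
  ∑ i, ∑ j, A i j * B i j

lemma ip_add {n r : ℕ} (A B C : Matrix (Fin n) (Fin r) ℝ) :
    ip A (B + C) = ip A B + ip A C := by
  simp [ip, mul_add, Finset.sum_add_distrib]

lemma ip_sub {n r : ℕ} (A B C : Matrix (Fin n) (Fin r) ℝ) :
    ip A (B - C) = ip A B - ip A C := by
  simp [ip, mul_sub, Finset.sum_sub_distrib]

lemma ip_neg {n r : ℕ} (A B : Matrix (Fin n) (Fin r) ℝ) :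
    ip A (-B) = - ip A B := by
  simp [ip]

lemma ip_smul {n r : ℕ} (c : ℝ) (A B : Matrix (Fin n) (Fin r) ℝ) :
    ip A (c • B) = c * ip A B := by
  simp [ip, Finset.mul_sum]; apply Finset.sum_congr rfl; intros; apply Finset.sum_congr rfl
  intros; ring

lemma ip_zero {n r : ℕ} (A : Matrix (Fin n) (Fin r) ℝ) :
    ip A (0 : Matrix (Fin n) (Fin r) ℝ) = 0 := by
  simp [ip]

lemma ip_mulcol {n r : ℕ} (M : Matrix (Fin n) (Fin n) ℝ) (D : Matrix (Fin n) (Fin r) ℝ) :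
    ip D (M * D) = ∑ j, (fun i => D i j) ⬝ᵥ (M *ᵥ fun i => D i j) := by
  simp only [ip, Matrix.mul_apply, dotProduct, Matrix.mulVec]
  rw [Finset.sum_comm]

lemma ip_self_col {n r : ℕ} (D : Matrix (Fin n) (Fin r) ℝ) :
    ip D D = ∑ j, (fun i => D i j) ⬝ᵥ (fun i => D i j) := by
  simp only [ip, dotProduct]
  rw [Finset.sum_comm]

lemma ip_self_nonneg {n r : ℕ} (D : Matrix (Fin n) (Fin r) ℝ) : 0 ≤ ip D D :=
  Finset.sum_nonneg fun _ _ => Finset.sum_nonneg fun _ _ => mul_self_nonneg _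

lemma antisym_nonneg {n : ℕ} (f : Fin n → Fin n → ℝ) :
    0 ≤ ∑ i, ∑ k, (f i k - f k i) * f i k := by
  have hs : ∑ i, ∑ k, (f i k - f k i) * f i k = ∑ i, ∑ k, (f k i - f i k) * f k i :=
    Finset.sum_comm
  have h2 : ∑ i, ∑ k, ((f i k - f k i) * f i k + (f k i - f i k) * f k i)
      = ∑ i, ∑ k, (f i k - f k i)^2 := by
    apply Finset.sum_congr rfl; intros; apply Finset.sum_congr rfl; intros; ring
  have h3 : (∑ i, ∑ k, (f i k - f k i) * f i k) + (∑ i, ∑ k, (f k i - f i k) * f k i)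
      = ∑ i, ∑ k, (f i k - f k i)^2 := by
    rw [← h2]; simp [Finset.sum_add_distrib]
  have h4 : (0:ℝ) ≤ ∑ i, ∑ k, (f i k - f k i)^2 :=
    Finset.sum_nonneg fun i _ => Finset.sum_nonneg fun k _ => sq_nonneg _
  nlinarith [hs, h3]

lemma ip_mul_right {n r : ℕ} (C : Matrix (Fin n) (Fin n) ℝ) (D U0 : Matrix (Fin n) (Fin r) ℝ) :
    ip D (C * U0) = ∑ i, ∑ k, C i k * (D * U0ᵀ) i k := by
  simp only [ip, Matrix.mul_apply, Matrix.transpose_apply]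
  apply Finset.sum_congr rfl
  intro i _
  calc ∑ j, D i j * ∑ k, C i k * U0 k j
      = ∑ j, ∑ k, C i k * (D i j * U0 k j) := by
        refine Finset.sum_congr rfl fun j _ => ?_
        rw [Finset.mul_sum]
        exact Finset.sum_congr rfl fun k _ => by ring
    _ = ∑ k, ∑ j, C i k * (D i j * U0 k j) := Finset.sum_comm
    _ = ∑ k, C i k * ∑ j, D i j * U0 k j := by
        exact Finset.sum_congr rfl fun k _ => (Finset.mul_sum _ _ _).symm

lemma ip_skew {n r : ℕ} (D U0 : Matrix (Fin n) (Fin r) ℝ) :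
    0 ≤ ip D ((D * U0ᵀ - U0 * Dᵀ) * U0) := by
  have hsw : ∀ i k, (U0 * Dᵀ) i k = (D * U0ᵀ) k i := by
    intro i k
    simp only [Matrix.mul_apply, Matrix.transpose_apply]
    exact Finset.sum_congr rfl fun j _ => mul_comm _ _
  rw [ip_mul_right]
  have h : ∀ i k, (D * U0ᵀ - U0 * Dᵀ) i k * (D * U0ᵀ) i k
      = ((D * U0ᵀ) i k - (D * U0ᵀ) k i) * (D * U0ᵀ) i k := by
    intro i k
    rw [Matrix.sub_apply, hsw]
  calc (0:ℝ) ≤ ∑ i, ∑ k, ((D * U0ᵀ) i k - (D * U0ᵀ) k i) * (D * U0ᵀ) i k :=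
        antisym_nonneg _
    _ = ∑ i, ∑ k, (D * U0ᵀ - U0 * Dᵀ) i k * (D * U0ᵀ) i k :=
        Finset.sum_congr rfl fun i _ => Finset.sum_congr rfl fun k _ => (h i k).symm

lemma rayleigh_lower {n : ℕ} [NeZero n] (X : Matrix (Fin n) (Fin n) ℝ) (hX : X.IsHermitian)
    (d : Fin n → ℝ) : (⨅ i, hX.eigenvalues i) * (d ⬝ᵥ d) ≤ d ⬝ᵥ (X *ᵥ d) := by
  set Umat : Matrix (Fin n) (Fin n) ℝ := (hX.eigenvectorUnitary : Matrix (Fin n) (Fin n) ℝ)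
    with hUm
  set w : Fin n → ℝ := Umatᵀ *ᵥ d with hw
  have hstar : star Umat = Umatᵀ := by
    rw [Matrix.star_eq_conjTranspose, Matrix.conjTranspose_eq_transpose_of_trivial]
  have hUU : Umat * Umatᵀ = 1 := by
    rw [← hstar]; exact (Matrix.mem_unitaryGroup_iff).mp (hX.eigenvectorUnitary).2
  have hdw : ∀ y : Fin n → ℝ, d ⬝ᵥ (Umat *ᵥ y) = w ⬝ᵥ y := by
    intro y
    rw [Matrix.dotProduct_mulVec, hw, Matrix.mulVec_transpose]
  have h1 : d ⬝ᵥ (X *ᵥ d) = ∑ i, hX.eigenvalues i * (w i)^2 := by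
    conv_lhs => rw [hX.spectral_theorem, Unitary.conjStarAlgAut_apply]
    rw [← hUm, hstar, ← Matrix.mulVec_mulVec, ← Matrix.mulVec_mulVec, hdw, ← hw]
    simp [dotProduct, Matrix.mulVec_diagonal]
    apply Finset.sum_congr rfl
    intro i _
    ring
  have h2 : d ⬝ᵥ d = ∑ i, (w i)^2 := by
    have h : w ⬝ᵥ w = d ⬝ᵥ d := by
      calc w ⬝ᵥ w = w ⬝ᵥ (Umatᵀ *ᵥ d) := by rw [← hw]
        _ = (w ᵥ* Umatᵀ) ⬝ᵥ d := Matrix.dotProduct_mulVec _ _ _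
        _ = (Umat *ᵥ w) ⬝ᵥ d := by rw [Matrix.vecMul_transpose]
        _ = ((Umat * Umatᵀ) *ᵥ d) ⬝ᵥ d := by rw [hw, Matrix.mulVec_mulVec]
        _ = d ⬝ᵥ d := by rw [hUU, Matrix.one_mulVec]
    rw [← h]
    simp [dotProduct, sq]
  rw [h1, h2, Finset.mul_sum]
  apply Finset.sum_le_sum
  intro i _
  have : (⨅ i, hX.eigenvalues i) ≤ hX.eigenvalues i :=
    ciInf_le (Finite.bddBelow_range _) i
  nlinarith [sq_nonneg (w i)]

lemma spec_upper {n : ℕ} (A : Matrix (Fin n) (Fin n) ℝ) (d : Fin n → ℝ) :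
    d ⬝ᵥ (A *ᵥ d) ≤ specNorm A * (d ⬝ᵥ d) := by
  set f := (Matrix.toEuclideanCLM (𝕜 := ℝ) A :
    EuclideanSpace ℝ (Fin n) →L[ℝ] EuclideanSpace ℝ (Fin n))
  set w : EuclideanSpace ℝ (Fin n) := (WithLp.equiv 2 (Fin n → ℝ)).symm d with hw
  have hfw : f w = (WithLp.equiv 2 (Fin n → ℝ)).symm (A *ᵥ d) :=
    Matrix.toEuclideanCLM_toLp A d
  have h1 : d ⬝ᵥ (A *ᵥ d) = inner ℝ w (f w) := by
    rw [hfw]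
    simp [dotProduct, PiLp.inner_apply, hw, mul_comm]
  have h2 : d ⬝ᵥ d = ‖w‖ * ‖w‖ := by
    rw [← real_inner_self_eq_norm_mul_norm]
    simp only [hw, dotProduct, PiLp.inner_apply, WithLp.equiv_symm_apply, RCLike.inner_apply, conj_trivial]
  have h3 : inner ℝ w (f w) ≤ ‖w‖ * ‖f w‖ := real_inner_le_norm w (f w)
  have h4 : ‖f w‖ ≤ ‖f‖ * ‖w‖ := f.le_opNorm w
  have h5 : (0:ℝ) ≤ ‖w‖ := norm_nonneg w
  rw [h1, h2]
  calc (inner ℝ w (f w) : ℝ) ≤ ‖w‖ * ‖f w‖ := h3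
    _ ≤ ‖w‖ * (‖f‖ * ‖w‖) := by nlinarith
    _ = ‖f‖ * (‖w‖ * ‖w‖) := by ring

set_option maxHeartbeats 2000000 in
theorem critical_point_of_penalized_is_critical_of_symNMF {n r : ℕ} [NeZero n]
    (X : Matrix (Fin n) (Fin n) ℝ) (hX : X.IsHermitian)
    (lam : ℝ) (hlam : 0 < lam)
    (U V : Matrix (Fin n) (Fin r) ℝ)
    (hU : ∀ i j, 0 ≤ U i j) (hV : ∀ i j, 0 ≤ V i j)
    (G H : Matrix (Fin n) (Fin r) ℝ)
    (hGU : ∀ i j, G i j * U i j = 0) (hGnp : ∀ i j, G i j ≤ 0)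
    (hHV : ∀ i j, H i j * V i j = 0) (hHnp : ∀ i j, H i j ≤ 0)
    (heq1 : (U * Vᵀ - X) * V + lam • (U - V) + G = 0)
    (heq2 : (U * Vᵀ - X)ᵀ * U - lam • (U - V) + H = 0)
    (hnorm : specNorm (U * Vᵀ) < 2 * lam + ⨅ i, hX.eigenvalues i) :
    U = V ∧ ∃ G' : Matrix (Fin n) (Fin r) ℝ,
      (∀ i j, G' i j * U i j = 0) ∧ (∀ i j, G' i j ≤ 0) ∧
      (U * Uᵀ - X) * U + G' = 0 := by
  have hXT : Xᵀ = X := by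
    rw [← Matrix.conjTranspose_eq_transpose_of_trivial]; exact hX
  set D : Matrix (Fin n) (Fin r) ℝ := U - V with hD
  -- main matrix identity obtained by subtracting the two optimality conditions
  have hmain : X * D + (U * Vᵀ * V - V * Uᵀ * U) + (2 * lam) • D + (G - H) = 0 := by
    have h3 : ((U * Vᵀ - X) * V + lam • (U - V) + G)
        - ((U * Vᵀ - X)ᵀ * U - lam • (U - V) + H) = 0 := by
      rw [heq1, heq2]; simp
    rw [← h3]
    simp only [hD, Matrix.sub_mul, Matrix.transpose_mul, Matrix.transpose_sub,
      Matrix.transpose_transpose, hXT, Matrix.mul_sub, two_smul, add_smul]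
    module
  -- take the Frobenius inner product with D
  have key : ip D (X * D) + ip D (U * Vᵀ * V - V * Uᵀ * U)
      + (2 * lam) * ip D D + ip D (G - H) = 0 := by
    have h := congrArg (ip D) hmain
    rw [ip_zero] at h
    rw [← h, ip_add, ip_add, ip_add, ip_smul]
  -- bound (a): Rayleigh
  have ba : (⨅ i, hX.eigenvalues i) * ip D D ≤ ip D (X * D) := by
    rw [ip_mulcol, ip_self_col, Finset.mul_sum]
    exact Finset.sum_le_sum fun j _ => rayleigh_lower X hX _
  -- bound (spec)
  have bs : ip D ((U * Vᵀ) * D) ≤ specNorm (U * Vᵀ) * ip D D := by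
    rw [ip_mulcol, ip_self_col, Finset.mul_sum]
    exact Finset.sum_le_sum fun j _ => spec_upper _ _
  -- decomposition of the cross term
  have hdecomp : U * Vᵀ * V - V * Uᵀ * U = -(U * Vᵀ * D) + (D * Uᵀ - U * Dᵀ) * U := by
    simp only [hD, Matrix.mul_sub, Matrix.sub_mul, Matrix.transpose_sub, Matrix.transpose_mul]
    abel
  have bb : -(specNorm (U * Vᵀ) * ip D D) ≤ ip D (U * Vᵀ * V - V * Uᵀ * U) := by
    rw [hdecomp, ip_add, ip_neg]
    have := ip_skew D U
    have hsp := bs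
    linarith
  -- bound (c)
  have bc : 0 ≤ ip D (G - H) := by
    apply Finset.sum_nonneg
    intro i _
    apply Finset.sum_nonneg
    intro j _
    have h1 := hGU i j
    have h2 := hHV i j
    have h3 := hGnp i j
    have h4 := hHnp i j
    have h5 := hU i j
    have h6 := hV i j
    simp only [hD, Matrix.sub_apply]
    nlinarith
  -- conclude D = 0
  have hcoef : 0 < 2 * lam + (⨅ i, hX.eigenvalues i) - specNorm (U * Vᵀ) := by linarith
  have hDD : ip D D = 0 := by
    have hnn := ip_self_nonneg D
    nlinarith [key, ba, bb, bc]
  have hUV : U = V := by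
    have hsq : ∀ i ∈ Finset.univ, (0:ℝ) ≤ ∑ j, D i j * D i j :=
      fun i _ => Finset.sum_nonneg fun j _ => mul_self_nonneg _
    have h0 : ∀ i ∈ (Finset.univ : Finset (Fin n)), ∑ j, D i j * D i j = 0 :=
      (Finset.sum_eq_zero_iff_of_nonneg hsq).mp hDD
    ext i j
    have h1 : ∀ j ∈ (Finset.univ : Finset (Fin r)), D i j * D i j = 0 :=
      (Finset.sum_eq_zero_iff_of_nonneg
        (fun j _ => mul_self_nonneg _)).mp (h0 i (Finset.mem_univ i))
    have h2 : D i j * D i j = 0 := h1 j (Finset.mem_univ j)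
    have h3 : D i j = 0 := by nlinarith
    have h4 : U i j - V i j = 0 := h3
    linarith
  refine ⟨hUV, G, hGU, hGnp, ?_⟩
  have heq1' := heq1
  have hzero : lam • D = 0 := by rw [hD, hUV, sub_self, smul_zero]
  rw [← hUV, hzero, add_zero] at heq1'
  exact heq1'
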